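/- arXiv:2011.13661 — 2 statements merged into one kernel-verified Lean document; each statement's English description precedes it below -/
import Mathlib

section
/- Let F ∈ ℝ^{d×d} be a symmetric matrix, G ∈ ℝ^{d×d} a positive semi-definite matrix, and δ ∈ [0,1]. Then tr( G^{δ} F G^{1−δ} F ) ≤ tr( G F² ). -/
open MeasureTheory Filter Matrix

noncomputable section

/-- Mass of a set under a density. -/
def setMass {d : ℕ} (p : EuclideanSpace ℝ (Fin d) → ℝ) (S : Set (EuclideanSpace ℝ (Fin d))) : ℝ :=
  ∫ x in S, p x

/-- `p` is a log-concave probability density on `ℝ^d`. -/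
def IsLogConcaveDensity {d : ℕ} (p : EuclideanSpace ℝ (Fin d) → ℝ) : Prop :=
  (∀ x, 0 ≤ p x) ∧ (∫ x, p x = 1) ∧
    ∀ x y : EuclideanSpace ℝ (Fin d), ∀ t : ℝ, t ∈ Set.Icc (0:ℝ) 1 →
      p (t • x + (1 - t) • y) ≥ p x ^ t * p y ^ (1 - t)

/-- Boundary measure `p⁺(∂S)`. -/
def boundaryMeasure {d : ℕ} (p : EuclideanSpace ℝ (Fin d) → ℝ)
    (S : Set (EuclideanSpace ℝ (Fin d))) : ℝ :=
  Filter.liminf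
    (fun ε : ℝ => (setMass p {x | Metric.infDist x S ≤ ε} - setMass p S) / ε)
    (nhdsWithin 0 (Set.Ioi 0))

/-- Isoperimetric coefficient. -/
def isoperiCoeff {d : ℕ} (p : EuclideanSpace ℝ (Fin d) → ℝ) : ℝ :=
  sInf { r | ∃ S : Set (EuclideanSpace ℝ (Fin d)), MeasurableSet S ∧
    0 < setMass p S ∧ setMass p S < 1 ∧
    r = boundaryMeasure p S / min (setMass p S) (setMass p Sᶜ) }

/-- Mean of a density. -/
def densMean {d : ℕ} (p : EuclideanSpace ℝ (Fin d) → ℝ) : EuclideanSpace ℝ (Fin d) :=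
  ∫ x, p x • x

/-- Covariance matrix of a density. -/
def covMatrix {d : ℕ} (p : EuclideanSpace ℝ (Fin d) → ℝ) : Matrix (Fin d) (Fin d) ℝ :=
  Matrix.of fun i j => ∫ x, p x * ((x i - densMean p i) * (x j - densMean p j))

/-- Spectral norm of a matrix. -/
def specNorm {d : ℕ} (A : Matrix (Fin d) (Fin d) ℝ) : ℝ :=
  ‖Matrix.toEuclideanCLM (𝕜 := ℝ) A‖

/-- The KLS infimum constant over dimension `k`. -/
def psiDim (k : ℕ) : ℝ :=
  sInf { r | ∃ p : EuclideanSpace ℝ (Fin k) → ℝ, IsLogConcaveDensity p ∧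
    HasCompactSupport p ∧ r = isoperiCoeff p * Real.sqrt (specNorm (covMatrix p)) }

/-- Real power of a symmetric matrix through its spectral decomposition. -/
def matRpow {d : ℕ} (A : Matrix (Fin d) (Fin d) ℝ) (r : ℝ) : Matrix (Fin d) (Fin d) ℝ :=
  if hA : A.IsHermitian then
    (hA.eigenvectorUnitary : Matrix (Fin d) (Fin d) ℝ) *
      Matrix.diagonal (fun i => hA.eigenvalues i ^ r) *
      (star (hA.eigenvectorUnitary : Matrix (Fin d) (Fin d) ℝ))
  else 0

/-- The 3-tensor `T_p(A,B,C)` of a density. -/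
def ttensor {d : ℕ} (p : EuclideanSpace ℝ (Fin d) → ℝ)
    (A B C : Matrix (Fin d) (Fin d) ℝ) : ℝ :=
  ∫ x : EuclideanSpace ℝ (Fin d), ∫ y : EuclideanSpace ℝ (Fin d),
    p x * p y *
      (((fun i => x i - densMean p i) ⬝ᵥ A.mulVec (fun i => y i - densMean p i)) *
       ((fun i => x i - densMean p i) ⬝ᵥ B.mulVec (fun i => y i - densMean p i)) *
       ((fun i => x i - densMean p i) ⬝ᵥ C.mulVec (fun i => y i - densMean p i)))

/-- `p` is more log-concave than `N(0, τ⁻¹ I_d)`. -/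
def IsMoreLogConcaveThanGauss {d : ℕ} (τ : ℝ) (p : EuclideanSpace ℝ (Fin d) → ℝ) : Prop :=
  (∀ x, 0 ≤ p x) ∧ (∫ x, p x = 1) ∧
    ∀ x y : EuclideanSpace ℝ (Fin d), ∀ t : ℝ, t ∈ Set.Icc (0:ℝ) 1 →
      p (t • x + (1 - t) • y) * Real.exp (τ * ‖t • x + (1 - t) • y‖ ^ 2 / 2) ≥
        (p x * Real.exp (τ * ‖x‖ ^ 2 / 2)) ^ t *
        (p y * Real.exp (τ * ‖y‖ ^ 2 / 2)) ^ (1 - t)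

end

/-- trace inequality à la Lieb–Thirring. -/
theorem trace_rpow_inequality {d : ℕ} (F G : Matrix (Fin d) (Fin d) ℝ)
    (hF : F.IsHermitian) (hG : G.PosSemidef) (δ : ℝ) (hδ : δ ∈ Set.Icc (0 : ℝ) 1) :
    Matrix.trace (matRpow G δ * F * matRpow G (1 - δ) * F) ≤ Matrix.trace (G * F ^ 2) := by
  have hGh : G.IsHermitian := hG.isHermitian
  set U : Matrix (Fin d) (Fin d) ℝ := (hGh.eigenvectorUnitary : Matrix (Fin d) (Fin d) ℝ) with hU
  set lam : Fin d → ℝ := hGh.eigenvalues with hlam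
  have hUs : star U * U = 1 := (Matrix.mem_unitaryGroup_iff').mp hGh.eigenvectorUnitary.2
  have hUs' : U * star U = 1 := (Matrix.mem_unitaryGroup_iff).mp hGh.eigenvectorUnitary.2
  have hUsX : ∀ X : Matrix (Fin d) (Fin d) ℝ, star U * (U * X) = X := fun X => by
    rw [← mul_assoc, hUs, one_mul]
  have hUs'X : ∀ X : Matrix (Fin d) (Fin d) ℝ, U * (star U * X) = X := fun X => by
    rw [← mul_assoc, hUs', one_mul]
  set H : Matrix (Fin d) (Fin d) ℝ := star U * F * U with hH
  have hHh : H.IsHermitian := by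
    rw [hH, Matrix.star_eq_conjTranspose]
    exact Matrix.isHermitian_conjTranspose_mul_mul U hF
  have hHsymm : ∀ i j, H j i = H i j := fun i j => by
    have := hHh.apply j i
    simpa using this.symm
  have hlam0 : ∀ i, 0 ≤ lam i := hG.eigenvalues_nonneg
  -- trace of matRpow product as a double sum
  have key : ∀ a b : ℝ, Matrix.trace (matRpow G a * F * matRpow G b * F)
      = ∑ i, ∑ j, lam i ^ a * lam j ^ b * (H i j)^2 := by
    intro a b
    have hexp : matRpow G a * F * matRpow G b * F
        = U * (Matrix.diagonal (fun i => lam i ^ a) * H * Matrix.diagonal (fun i => lam i ^ b) * H)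
          * star U := by
      simp only [matRpow, dif_pos hGh, hH, ← hU, ← hlam]
      simp only [mul_assoc, hUsX, hUs'X, hUs', mul_one]
    rw [hexp, Matrix.trace_mul_comm, ← mul_assoc, hUs, one_mul, Matrix.trace]
    refine Finset.sum_congr rfl fun i _ => ?_
    rw [Matrix.diag_apply, Matrix.mul_apply]
    refine Finset.sum_congr rfl fun j _ => ?_
    rw [Matrix.mul_diagonal, Matrix.diagonal_mul, hHsymm i j]
    ring
  -- trace of G * F^2 as a double sum
  have key2 : Matrix.trace (G * F ^ 2) = ∑ i, ∑ j, lam i * (H i j)^2 := by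
    have hexp : G * F ^ 2 = U * (Matrix.diagonal lam * H * H) * star U := by
      conv_lhs => rw [hGh.spectral_theorem]
      rw [pow_two, hH]
      simp only [Unitary.conjStarAlgAut_apply, ← hU, ← hlam, RCLike.ofReal_real_eq_id, Function.comp_def, id_eq]
      simp only [mul_assoc, hUsX, hUs'X, hUs', mul_one]
    rw [hexp, Matrix.trace_mul_comm, ← mul_assoc, hUs, one_mul, Matrix.trace]
    refine Finset.sum_congr rfl fun i _ => ?_
    rw [Matrix.diag_apply, Matrix.mul_apply]
    refine Finset.sum_congr rfl fun j _ => ?_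
    rw [Matrix.diagonal_mul, hHsymm i j]
    ring
  rw [key δ (1 - δ), key2]
  -- symmetrize and apply weighted AM-GM
  have hswapL : ∑ i, ∑ j, lam i ^ δ * lam j ^ (1 - δ) * (H i j)^2
      = ∑ i, ∑ j, lam j ^ δ * lam i ^ (1 - δ) * (H i j)^2 := by
    rw [Finset.sum_comm]
    refine Finset.sum_congr rfl fun i _ => Finset.sum_congr rfl fun j _ => ?_
    rw [hHsymm i j]
  have hswapR : ∑ i, ∑ j, lam i * (H i j)^2 = ∑ i, ∑ j, lam j * (H i j)^2 := by
    rw [Finset.sum_comm]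
    refine Finset.sum_congr rfl fun i _ => Finset.sum_congr rfl fun j _ => ?_
    rw [hHsymm i j]
  have hmain : (2:ℝ) * (∑ i, ∑ j, lam i ^ δ * lam j ^ (1 - δ) * (H i j)^2)
      ≤ 2 * ∑ i, ∑ j, lam i * (H i j)^2 := by
    calc (2:ℝ) * (∑ i, ∑ j, lam i ^ δ * lam j ^ (1 - δ) * (H i j)^2)
        = ∑ i, ∑ j, (lam i ^ δ * lam j ^ (1 - δ) + lam j ^ δ * lam i ^ (1 - δ)) * (H i j)^2 := by
          rw [two_mul]
          nth_rewrite 2 [hswapL]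
          rw [← Finset.sum_add_distrib]
          refine Finset.sum_congr rfl fun i _ => ?_
          rw [← Finset.sum_add_distrib]
          exact Finset.sum_congr rfl fun j _ => by ring
      _ ≤ ∑ i, ∑ j, (lam i + lam j) * (H i j)^2 := by
          refine Finset.sum_le_sum fun i _ => Finset.sum_le_sum fun j _ => ?_
          refine mul_le_mul_of_nonneg_right ?_ (sq_nonneg _)
          have hδ' : (0:ℝ) ≤ 1 - δ := sub_nonneg.2 hδ.2
          have h1 : lam i ^ δ * lam j ^ (1 - δ) ≤ δ * lam i + (1 - δ) * lam j :=
            Real.geom_mean_le_arith_mean2_weighted hδ.1 hδ' (hlam0 i) (hlam0 j) (by ring)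
          have h2 : lam j ^ δ * lam i ^ (1 - δ) ≤ δ * lam j + (1 - δ) * lam i :=
            Real.geom_mean_le_arith_mean2_weighted hδ.1 hδ' (hlam0 j) (hlam0 i) (by ring)
          linarith
      _ = 2 * ∑ i, ∑ j, lam i * (H i j)^2 := by
          rw [two_mul]
          nth_rewrite 2 [hswapR]
          rw [← Finset.sum_add_distrib]
          refine Finset.sum_congr rfl fun i _ => ?_
          rw [← Finset.sum_add_distrib]
          exact Finset.sum_congr rfl fun j _ => by ring
  linarith
end

section
/- Let c ≥ 2 be a real number. Define β_1 = 1/2, β_{ℓ+1} = β_ℓ − β_ℓ²/16, and α_1 = 4, α_{ℓ+1} = 2c · α_ℓ · β_ℓ^{−1/2}. Then for every integer ℓ ≥ 1, α_ℓ ≤ (4c²ℓ)^{ℓ/2}. -/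
open MeasureTheory Filter Matrix

/-- bound on the recursively defined sequence `α_ℓ`. -/
theorem alpha_seq_bound (c : ℝ) (hc : 2 ≤ c) (α β : ℕ → ℝ)
    (hβ1 : β 1 = 1 / 2) (hβrec : ∀ ℓ : ℕ, 1 ≤ ℓ → β (ℓ + 1) = β ℓ - β ℓ ^ 2 / 16)
    (hα1 : α 1 = 4)
    (hαrec : ∀ ℓ : ℕ, 1 ≤ ℓ → α (ℓ + 1) = 2 * c * α ℓ * β ℓ ^ (-(1 : ℝ) / 2)) :
    ∀ ℓ : ℕ, 1 ≤ ℓ → α ℓ ≤ (4 * c ^ 2 * (ℓ : ℝ)) ^ ((ℓ : ℝ) / 2) := by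
  have hc0 : (0:ℝ) < c := by linarith
  -- bounds on β
  have hβb : ∀ ℓ : ℕ, 1 ≤ ℓ → 1 / ((ℓ:ℝ) + 1) ≤ β ℓ ∧ β ℓ ≤ 1 / 2 := by
    intro ℓ hℓ
    induction ℓ, hℓ using Nat.le_induction with
    | base => rw [hβ1]; norm_num
    | succ n hn ih =>
      obtain ⟨hlo, hhi⟩ := ih
      have hn1 : (0:ℝ) < (n:ℝ) + 1 := by positivity
      have hpos : 0 < β n := lt_of_lt_of_le (by positivity) hlo
      rw [hβrec n hn]
      constructor
      · have key : 1 / ((n:ℝ) + 1) - (1 / ((n:ℝ) + 1)) ^ 2 / 16 ≤ β n - β n ^ 2 / 16 := by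
          nlinarith [sq_nonneg (β n - 1 / ((n:ℝ)+1)), sq_nonneg ((n:ℝ)+1)]
        have key2 : 1 / ((n:ℝ) + 1 + 1) ≤ 1 / ((n:ℝ) + 1) - (1 / ((n:ℝ) + 1)) ^ 2 / 16 := by
          set a : ℝ := (n:ℝ) + 1 with ha
          have ha1 : (1:ℝ) ≤ a := by simp [ha]
          have ha0 : (0:ℝ) < a := by linarith
          have expand : 1 / a - (1 / a) ^ 2 / 16 - 1 / (a + 1) =
              (15 * a - 1) / (16 * a ^ 2 * (a + 1)) := by
            field_simp
            ring
          have hnn : (0:ℝ) ≤ (15 * a - 1) / (16 * a ^ 2 * (a + 1)) := by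
            apply div_nonneg (by linarith) (by positivity)
          linarith [expand ▸ hnn]
        push_cast
        linarith
      · nlinarith
  intro ℓ hℓ
  induction ℓ, hℓ using Nat.le_induction with
  | base =>
    rw [hα1]
    have : (4 * c ^ 2 * ((1:ℕ):ℝ)) = (2*c)^2 := by push_cast; ring
    rw [this]
    have h2 : ((2*c)^2) ^ (((1:ℕ):ℝ) / 2) = 2*c := by
      rw [show (((1:ℕ):ℝ)/2) = (1/2 : ℝ) by norm_num, ← Real.sqrt_eq_rpow]
      exact Real.sqrt_sq (by linarith)
    rw [h2]; linarith
  | succ n hn ih =>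
    obtain ⟨hlo, hhi⟩ := hβb n hn
    have hn1 : (0:ℝ) < (n:ℝ) + 1 := by positivity
    have hβpos : 0 < β n := lt_of_lt_of_le (by positivity) hlo
    -- β n ^ (-1/2) ≤ (n+1)^(1/2)
    have hstep : β n ^ (-(1:ℝ)/2) ≤ ((n:ℝ) + 1) ^ ((1:ℝ)/2) := by
      have h1 : β n ^ (-(1:ℝ)/2) ≤ (1 / ((n:ℝ)+1)) ^ (-(1:ℝ)/2) :=
        Real.rpow_le_rpow_of_nonpos (by positivity) hlo (by norm_num)
      have h2 : (1 / ((n:ℝ)+1)) ^ (-(1:ℝ)/2) = ((n:ℝ)+1) ^ ((1:ℝ)/2) := by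
        rw [one_div, ← Real.rpow_neg_one, ← Real.rpow_mul hn1.le]
        norm_num
      rw [h2] at h1; exact h1
    have hrp_nonneg : (0:ℝ) ≤ β n ^ (-(1:ℝ)/2) := Real.rpow_nonneg hβpos.le _
    have hA : α (n+1) ≤ 2 * c * (4 * c ^ 2 * (n:ℝ)) ^ ((n:ℝ)/2) * (((n:ℝ)+1) ^ ((1:ℝ)/2)) := by
      rw [hαrec n hn]
      have t1 : 2 * c * α n * β n ^ (-(1:ℝ)/2) ≤
          2 * c * (4 * c ^ 2 * (n:ℝ)) ^ ((n:ℝ)/2) * β n ^ (-(1:ℝ)/2) := by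
        apply mul_le_mul_of_nonneg_right _ hrp_nonneg
        apply mul_le_mul_of_nonneg_left ih (by linarith)
      have t2 : 2 * c * (4 * c ^ 2 * (n:ℝ)) ^ ((n:ℝ)/2) * β n ^ (-(1:ℝ)/2) ≤
          2 * c * (4 * c ^ 2 * (n:ℝ)) ^ ((n:ℝ)/2) * (((n:ℝ)+1) ^ ((1:ℝ)/2)) := by
        apply mul_le_mul_of_nonneg_left hstep
        positivity
      linarith
    refine hA.trans ?_
    -- RHS expansion
    have hbase : (0:ℝ) < 4 * c ^ 2 * ((n:ℝ)+1) := by positivity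
    have hsplit : (4 * c ^ 2 * (((n+1:ℕ)):ℝ)) ^ (((n+1:ℕ):ℝ)/2) =
        (4 * c ^ 2 * ((n:ℝ)+1)) ^ ((n:ℝ)/2) * (2*c * (((n:ℝ)+1) ^ ((1:ℝ)/2))) := by
      push_cast
      rw [show ((n:ℝ)+1)/2 = (n:ℝ)/2 + 1/2 by ring, Real.rpow_add hbase]
      congr 1
      rw [show (4 * c ^ 2 * ((n:ℝ)+1)) = (2*c)^2 * ((n:ℝ)+1) by ring,
        Real.mul_rpow (by positivity) hn1.le]
      congr 1
      rw [show ((1:ℝ)/2) = ((2:ℕ):ℝ)⁻¹ by norm_num, Real.pow_rpow_inv_natCast (by linarith) (by norm_num)]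
    rw [hsplit]
    have hmono : (4 * c ^ 2 * (n:ℝ)) ^ ((n:ℝ)/2) ≤ (4 * c ^ 2 * ((n:ℝ)+1)) ^ ((n:ℝ)/2) := by
      apply Real.rpow_le_rpow (by positivity) (by nlinarith [sq_nonneg c]) (by positivity)
    calc 2 * c * (4 * c ^ 2 * (n:ℝ)) ^ ((n:ℝ)/2) * (((n:ℝ)+1) ^ ((1:ℝ)/2))
        ≤ 2 * c * (4 * c ^ 2 * ((n:ℝ)+1)) ^ ((n:ℝ)/2) * (((n:ℝ)+1) ^ ((1:ℝ)/2)) := by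
          apply mul_le_mul_of_nonneg_right _ (by positivity)
          apply mul_le_mul_of_nonneg_left hmono (by linarith)
      _ = (4 * c ^ 2 * ((n:ℝ)+1)) ^ ((n:ℝ)/2) * (2*c * (((n:ℝ)+1) ^ ((1:ℝ)/2))) := by ring
end
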